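/- Let R = A ×_k B be the fiber product of positively graded Noetherian k-algebras over a field k. Then the annihilator of m_R decomposes as (0 :_R m_R) = ((0 :_A m_A))·R ⊕ ((0 :_B m_B))·R, where the extensions are via ι_1 and ι_2. -/

import Mathlib

set_option synthInstance.maxHeartbeats 1000000
set_option maxHeartbeats 1000000

noncomputable section

/-- The fiber product `A ×ₖ B = {(a,b) : f a = g b}`, as a subalgebra of `A × B`. -/
def fiberProd {k A B : Type*} [CommSemiring k] [Semiring A] [Semiring B]
    [Algebra k A] [Algebra k B] (f : A →ₐ[k] k) (g : B →ₐ[k] k) : Subalgebra k (A × B) :=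
  AlgHom.equalizer (f.comp (AlgHom.fst k A B)) (g.comp (AlgHom.snd k A B))

/-- The canonical map `ι₁ : A → A ×ₖ B`, `a ↦ (a, f a)`. -/
def fiberProdInl {k A B : Type*} [CommSemiring k] [Semiring A] [Semiring B]
    [Algebra k A] [Algebra k B] (f : A →ₐ[k] k) (g : B →ₐ[k] k) :
    A →ₐ[k] fiberProd f g :=
  AlgHom.codRestrict ((AlgHom.id k A).prod ((Algebra.ofId k B).comp f)) (fiberProd f g)
    (fun a => by simp [fiberProd, AlgHom.mem_equalizer, Algebra.ofId_apply, AlgHom.commutes])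

/-- The canonical map `ι₂ : B → A ×ₖ B`, `b ↦ (g b, b)`. -/
def fiberProdInr {k A B : Type*} [CommSemiring k] [Semiring A] [Semiring B]
    [Algebra k A] [Algebra k B] (f : A →ₐ[k] k) (g : B →ₐ[k] k) :
    B →ₐ[k] fiberProd f g :=
  AlgHom.codRestrict (((Algebra.ofId k A).comp g).prod (AlgHom.id k B)) (fiberProd f g)
    (fun b => by simp [fiberProd, AlgHom.mem_equalizer, Algebra.ofId_apply, AlgHom.commutes])

/-- The augmentation `R = A ×ₖ B → k`, `(a,b) ↦ f a (= g b)`. -/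
def fiberProdAug {k A B : Type*} [CommSemiring k] [Semiring A] [Semiring B]
    [Algebra k A] [Algebra k B] (f : A →ₐ[k] k) (g : B →ₐ[k] k) :
    fiberProd f g →ₐ[k] k :=
  f.comp ((AlgHom.fst k A B).comp (fiberProd f g).val)

/-- Key lemma: in a positively graded algebra with a nonzero positive piece, the annihilator
of the augmentation ideal is contained in the augmentation ideal. -/
theorem ann_le_ker {k A : Type*} [Field k] [CommRing A] [Algebra k A]
    (𝒜 : ℕ → Submodule k A) [GradedAlgebra 𝒜]
    (h𝒜 : 𝒜 0 ≤ LinearMap.range (Algebra.linearMap k A))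
    (f : A →ₐ[k] k) (hf : ∀ i, 0 < i → ∀ a ∈ 𝒜 i, f a = 0)
    (hA : ∃ i, 0 < i ∧ 𝒜 i ≠ ⊥) :
    (RingHom.ker f : Ideal A).annihilator ≤ RingHom.ker f := by
  intro a ha
  rw [Submodule.mem_annihilator] at ha
  obtain ⟨i, hi, hne⟩ := hA
  obtain ⟨x, hxmem, hxne⟩ := Submodule.exists_mem_ne_zero_of_ne_bot hne
  have hxker : x ∈ RingHom.ker f := by
    rw [RingHom.mem_ker]; exact hf i hi x hxmem
  have hax : a * x = 0 := ha x hxker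
  have h0 : (DirectSum.decompose 𝒜 a 0 : A) * x = 0 := by
    have := DirectSum.coe_decompose_mul_of_right_mem_of_le 𝒜 (a := a) hxmem (le_refl i)
    rw [hax, Nat.sub_self] at this
    simpa using this.symm
  obtain ⟨c, hc⟩ := h𝒜 (DirectSum.decompose 𝒜 a 0).2
  have hcx : c • x = 0 := by
    rw [Algebra.smul_def]
    have : (algebraMap k A) c = (DirectSum.decompose 𝒜 a 0 : A) := hc
    rw [this]; exact h0
  have hc0 : c = 0 := by
    rcases smul_eq_zero.mp hcx with h | h
    · exact h
    · exact absurd h hxne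
  have ha0 : (DirectSum.decompose 𝒜 a 0 : A) = 0 := by
    rw [← hc, hc0, map_zero]
  rw [RingHom.mem_ker]
  classical
  conv_lhs => rw [← DirectSum.sum_support_decompose 𝒜 a]
  rw [map_sum]
  apply Finset.sum_eq_zero
  intro j hj
  rcases Nat.eq_zero_or_pos j with rfl | hjpos
  · rw [ha0, map_zero]
  · exact hf j hjpos _ (DirectSum.decompose 𝒜 a j).2

section Helpers

variable {k A B : Type*} [CommSemiring k] [Semiring A] [Semiring B]
    [Algebra k A] [Algebra k B] (f : A →ₐ[k] k) (g : B →ₐ[k] k)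

lemma fiberProd_mem_iff (p : A × B) : p ∈ fiberProd f g ↔ f p.1 = g p.2 := Iff.rfl

lemma fiberProdInl_coe (a : A) :
    ((fiberProdInl f g a : fiberProd f g) : A × B) = (a, algebraMap k B (f a)) := rfl

lemma fiberProdInr_coe (b : B) :
    ((fiberProdInr f g b : fiberProd f g) : A × B) = (algebraMap k A (g b), b) := rfl

lemma fiberProdAug_apply (x : fiberProd f g) : fiberProdAug f g x = f (x : A × B).1 := rfl

end Helpers

section Helpers2

variable {k A B : Type*} [CommRing k] [CommRing A] [CommRing B]
    [Algebra k A] [Algebra k B] (f : A →ₐ[k] k) (g : B →ₐ[k] k)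

lemma mem_map_inl_iff (hann : (RingHom.ker f : Ideal A).annihilator ≤ RingHom.ker f)
    (x : fiberProd f g) :
    x ∈ Ideal.map (fiberProdInl f g) ((RingHom.ker f : Ideal A).annihilator) ↔
      (x : A × B).1 ∈ (RingHom.ker f : Ideal A).annihilator ∧ (x : A × B).2 = 0 := by
  constructor
  · intro hx
    rw [Ideal.map, Ideal.span] at hx
    refine Submodule.span_induction ?_ ?_ ?_ ?_ hx
    · rintro y ⟨a, ha, rfl⟩
      have hfa : f a = 0 := hann ha
      rw [fiberProdInl_coe, hfa, map_zero]
      exact ⟨ha, rfl⟩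
    · exact ⟨Submodule.zero_mem _, rfl⟩
    · rintro y z hy hz ⟨hy1, hy2⟩ ⟨hz1, hz2⟩
      refine ⟨Submodule.add_mem _ hy1 hz1, ?_⟩
      show ((y : A × B) + (z : A × B)).2 = 0
      rw [Prod.snd_add, hy2, hz2, add_zero]
    · rintro r y hy ⟨hy1, hy2⟩
      rw [smul_eq_mul]
      refine ⟨Ideal.mul_mem_left _ _ hy1, ?_⟩
      show ((r : A × B) * (y : A × B)).2 = 0
      rw [Prod.snd_mul, hy2, mul_zero]
  · rintro ⟨h1, h2⟩
    have hf1 : f (x : A × B).1 = 0 := hann h1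
    have : x = fiberProdInl f g (x : A × B).1 := by
      apply Subtype.ext
      rw [fiberProdInl_coe, hf1, map_zero]
      exact Prod.ext rfl h2
    rw [this]
    exact Ideal.mem_map_of_mem _ h1


lemma mem_map_inr_iff (hann : (RingHom.ker g : Ideal B).annihilator ≤ RingHom.ker g)
    (x : fiberProd f g) :
    x ∈ Ideal.map (fiberProdInr f g) ((RingHom.ker g : Ideal B).annihilator) ↔
      (x : A × B).1 = 0 ∧ (x : A × B).2 ∈ (RingHom.ker g : Ideal B).annihilator := by
  constructor
  · intro hx
    rw [Ideal.map, Ideal.span] at hx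
    refine Submodule.span_induction ?_ ?_ ?_ ?_ hx
    · rintro y ⟨b, hb, rfl⟩
      have hgb : g b = 0 := hann hb
      rw [fiberProdInr_coe, hgb, map_zero]
      exact ⟨rfl, hb⟩
    · exact ⟨rfl, Submodule.zero_mem _⟩
    · rintro y z hy hz ⟨hy1, hy2⟩ ⟨hz1, hz2⟩
      refine ⟨?_, Submodule.add_mem _ hy2 hz2⟩
      show ((y : A × B) + (z : A × B)).1 = 0
      rw [Prod.fst_add, hy1, hz1, add_zero]
    · rintro r y hy ⟨hy1, hy2⟩
      rw [smul_eq_mul]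
      refine ⟨?_, Ideal.mul_mem_left _ _ hy2⟩
      show ((r : A × B) * (y : A × B)).1 = 0
      rw [Prod.fst_mul, hy1, mul_zero]
  · rintro ⟨h1, h2⟩
    have hg2 : g (x : A × B).2 = 0 := hann h2
    have : x = fiberProdInr f g (x : A × B).2 := by
      apply Subtype.ext
      rw [fiberProdInr_coe, hg2, map_zero]
      exact Prod.ext h1 rfl
    rw [this]
    exact Ideal.mem_map_of_mem _ h2

lemma mem_ann_iff (x : fiberProd f g) :
    x ∈ (RingHom.ker (fiberProdAug f g) : Ideal (fiberProd f g)).annihilator ↔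
      (x : A × B).1 ∈ (RingHom.ker f : Ideal A).annihilator ∧
        (x : A × B).2 ∈ (RingHom.ker g : Ideal B).annihilator := by
  rw [Submodule.mem_annihilator]
  constructor
  · intro h
    constructor
    · rw [Submodule.mem_annihilator]
      intro y hy
      have hyf : f y = 0 := RingHom.mem_ker.mp hy
      have hyR : ((y, (0 : B)) : A × B) ∈ fiberProd f g := by
        rw [fiberProd_mem_iff]; simp [hyf]
      have hker : (⟨(y, 0), hyR⟩ : fiberProd f g) ∈ RingHom.ker (fiberProdAug f g) := by
        rw [RingHom.mem_ker, fiberProdAug_apply]; exact hyf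
      have h0 := h _ hker
      rw [smul_eq_mul] at h0
      have h1 := congrArg (fun z : fiberProd f g => (z : A × B).1) h0
      simpa using h1
    · rw [Submodule.mem_annihilator]
      intro y hy
      have hyg : g y = 0 := RingHom.mem_ker.mp hy
      have hyR : (((0 : A), y) : A × B) ∈ fiberProd f g := by
        rw [fiberProd_mem_iff]; simp [hyg]
      have hker : (⟨(0, y), hyR⟩ : fiberProd f g) ∈ RingHom.ker (fiberProdAug f g) := by
        rw [RingHom.mem_ker, fiberProdAug_apply]; simp
      have h0 := h _ hker
      rw [smul_eq_mul] at h0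
      have h1 := congrArg (fun z : fiberProd f g => (z : A × B).2) h0
      simpa using h1
  · rintro ⟨h1, h2⟩ y hy
    have hf1 : f (y : A × B).1 = 0 := RingHom.mem_ker.mp hy
    have hg2 : g (y : A × B).2 = 0 := by
      have := (fiberProd_mem_iff f g _).mp y.2
      rw [← this]; exact hf1
    rw [smul_eq_mul]
    apply Subtype.ext
    show (x : A × B) * (y : A × B) = 0
    apply Prod.ext
    · have := Submodule.mem_annihilator.mp h1 _ (RingHom.mem_ker.mpr hf1)
      simpa [smul_eq_mul] using this
    · have := Submodule.mem_annihilator.mp h2 _ (RingHom.mem_ker.mpr hg2)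
      simpa [smul_eq_mul] using this

end Helpers2

/-- Let `R = A ×ₖ B` be the fiber product of positively graded Noetherian
`k`-algebras over a field `k`. Then the annihilator of `m_R` decomposes as
`(0 :_R m_R) = (0 :_A m_A)·R ⊕ (0 :_B m_B)·R`, the extensions being taken via `ι₁` and `ι₂`. -/
theorem fiberProd_annihilator_maximalIdeal {k A B : Type*} [Field k] [CommRing A] [CommRing B]
    [Algebra k A] [Algebra k B] [IsNoetherianRing A] [IsNoetherianRing B]
    (𝒜 : ℕ → Submodule k A) (ℬ : ℕ → Submodule k B)
    [GradedAlgebra 𝒜] [GradedAlgebra ℬ]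
    (h𝒜 : 𝒜 0 ≤ LinearMap.range (Algebra.linearMap k A))
    (hℬ : ℬ 0 ≤ LinearMap.range (Algebra.linearMap k B))
    (f : A →ₐ[k] k) (g : B →ₐ[k] k)
    (hf : ∀ i, 0 < i → ∀ a ∈ 𝒜 i, f a = 0)
    (hg : ∀ i, 0 < i → ∀ b ∈ ℬ i, g b = 0)
    (hA : ∃ i, 0 < i ∧ 𝒜 i ≠ ⊥) (hB : ∃ i, 0 < i ∧ ℬ i ≠ ⊥) :
    (RingHom.ker (fiberProdAug f g) : Ideal (fiberProd f g)).annihilator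
        = Ideal.map (fiberProdInl f g) ((RingHom.ker f : Ideal A).annihilator)
            ⊔ Ideal.map (fiberProdInr f g) ((RingHom.ker g : Ideal B).annihilator) ∧
      Ideal.map (fiberProdInl f g) ((RingHom.ker f : Ideal A).annihilator)
          ⊓ Ideal.map (fiberProdInr f g) ((RingHom.ker g : Ideal B).annihilator) = ⊥ := by
  have hannA := ann_le_ker 𝒜 h𝒜 f hf hA
  have hannB := ann_le_ker ℬ hℬ g hg hB
  constructor
  · ext x
    rw [mem_ann_iff, Submodule.mem_sup]
    constructor
    · rintro ⟨h1, h2⟩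
      have hf1 : f (x : A × B).1 = 0 := hannA h1
      have hg2 : g (x : A × B).2 = 0 := hannB h2
      refine ⟨⟨((x : A × B).1, 0), by rw [fiberProd_mem_iff]; simp [hf1]⟩, ?_,
        ⟨(0, (x : A × B).2), by rw [fiberProd_mem_iff]; simp [hg2]⟩, ?_, ?_⟩
      · rw [mem_map_inl_iff f g hannA]; exact ⟨h1, rfl⟩
      · rw [mem_map_inr_iff f g hannB]; exact ⟨rfl, h2⟩
      · apply Subtype.ext
        show (((x : A × B).1, (0 : B)) : A × B) + ((0 : A), (x : A × B).2) = (x : A × B)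
        ext <;> simp
    · rintro ⟨y, hy, z, hz, rfl⟩
      rw [mem_map_inl_iff f g hannA] at hy
      rw [mem_map_inr_iff f g hannB] at hz
      constructor
      · show ((y : A × B) + (z : A × B)).1 ∈ _
        rw [Prod.fst_add, hz.1, add_zero]; exact hy.1
      · show ((y : A × B) + (z : A × B)).2 ∈ _
        rw [Prod.snd_add, hy.2, zero_add]; exact hz.2
  · rw [eq_bot_iff]
    intro x hx
    obtain ⟨hx1, hx2⟩ := Submodule.mem_inf.mp hx
    rw [mem_map_inl_iff f g hannA] at hx1
    rw [mem_map_inr_iff f g hannB] at hx2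
    have hx0 : (x : A × B) = 0 := Prod.ext hx2.1 hx1.2
    rw [Ideal.mem_bot]
    exact Subtype.ext hx0
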